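/- (Relative entropy bound for perturbed states, second direction.) Let D be a positive definite density matrix on ℂ^n, let h be a Hermitian n×n matrix, and define the perturbed density matrix D^h = e^{log D + h}/Tr(e^{log D + h}). Then S(D | D^h) = log Tr(e^{log D + h}) − Tr(D h) and S(D | D^h) ≤ 2‖h‖, where ‖·‖ is the operator norm. -/

import Mathlib

open scoped Kronecker ComplexOrder
open Matrix

noncomputable section

namespace TAL

/-- A density matrix: positive semidefinite with trace `1`. -/
def IsDensityMatrix {k : Type*} [Fintype k] [DecidableEq k] (D : Matrix k k ℂ) : Prop :=
  D.PosSemidef ∧ D.trace = 1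

/-- Functional calculus for Hermitian matrices via the spectral decomposition
(junk value `0` on non-Hermitian matrices). -/
def hermCalc {k : Type*} [Fintype k] [DecidableEq k] (f : ℝ → ℝ) (A : Matrix k k ℂ) :
    Matrix k k ℂ :=
  if hA : A.IsHermitian then
    (hA.eigenvectorUnitary : Matrix k k ℂ) *
      Matrix.diagonal (fun i => (f (hA.eigenvalues i) : ℂ)) *
        star (hA.eigenvectorUnitary : Matrix k k ℂ)
  else 0

/-- Matrix logarithm via the spectral decomposition. -/
def matLog {k : Type*} [Fintype k] [DecidableEq k] (A : Matrix k k ℂ) : Matrix k k ℂ :=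
  hermCalc Real.log A

/-- The von Neumann entropy `S(D) = -Tr (D log D)`, computed through the eigenvalues,
with the convention `0 * log 0 = 0` (junk value `0` on non-Hermitian matrices). -/
def vnEntropy {k : Type*} [Fintype k] [DecidableEq k] (A : Matrix k k ℂ) : ℝ :=
  if hA : A.IsHermitian then ∑ i, Real.negMulLog (hA.eigenvalues i) else 0

/-- The Umegaki relative entropy `S(D | E) = Tr (D (log D - log E))`. -/
def relEntropy {k : Type*} [Fintype k] [DecidableEq k] (D E : Matrix k k ℂ) : ℝ :=
  ((D * (matLog D - matLog E)).trace).re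

/-- Partial trace over the second (right) tensor factor. -/
def ptraceR {k₁ k₂ : Type*} [Fintype k₂] (D : Matrix (k₁ × k₂) (k₁ × k₂) ℂ) :
    Matrix k₁ k₁ ℂ :=
  Matrix.of fun i j => ∑ s : k₂, D (i, s) (j, s)

/-- Partial trace over the first (left) tensor factor. -/
def ptraceL {k₁ k₂ : Type*} [Fintype k₁] (D : Matrix (k₁ × k₂) (k₁ × k₂) ℂ) :
    Matrix k₂ k₂ ℂ :=
  Matrix.of fun i j => ∑ s : k₁, D (s, i) (s, j)

/-- The mutual entropy `I_D(A:B) = S(D_A) + S(D_B) - S(D)`. -/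
def mutualEntropy {k₁ k₂ : Type*} [Fintype k₁] [Fintype k₂] [DecidableEq k₁] [DecidableEq k₂]
    (D : Matrix (k₁ × k₂) (k₁ × k₂) ℂ) : ℝ :=
  vnEntropy (ptraceR D) + vnEntropy (ptraceL D) - vnEntropy D

/-- The Gibbs density matrix `e^{-β H} / Tr(e^{-β H})`. -/
def gibbs {k : Type*} [Fintype k] [DecidableEq k] (β : ℝ) (H : Matrix k k ℂ) :
    Matrix k k ℂ :=
  (NormedSpace.exp ((-(β : ℂ)) • H)).trace⁻¹ • NormedSpace.exp ((-(β : ℂ)) • H)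

/-- The free energy functional `F(D) = Tr(H D) - β⁻¹ S(D)` (real part of the trace). -/
def freeEnergy {k : Type*} [Fintype k] [DecidableEq k] (β : ℝ) (H D : Matrix k k ℂ) : ℝ :=
  ((H * D).trace).re - β⁻¹ * vnEntropy D

/-- The ℓ²-operator norm of a matrix. -/
def opNorm {k : Type*} [Fintype k] [DecidableEq k] (A : Matrix k k ℂ) : ℝ :=
  ‖(Matrix.toEuclideanCLM (𝕜 := ℂ) A : EuclideanSpace ℂ k →L[ℂ] EuclideanSpace ℂ k)‖

/-- The trace norm `‖X‖₁ = Tr ((X* X)^{1/2})`. -/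
def traceNorm {k : Type*} [Fintype k] [DecidableEq k] (X : Matrix k k ℂ) : ℝ :=
  (((Matrix.posSemidef_conjTranspose_mul_self X).isHermitian.eigenvectorUnitary.1 *
      Matrix.diagonal (fun i =>
        ((√((Matrix.posSemidef_conjTranspose_mul_self X).isHermitian.eigenvalues i) : ℝ) : ℂ)) *
      (star (Matrix.posSemidef_conjTranspose_mul_self X).isHermitian.eigenvectorUnitary :
        Matrix k k ℂ)).trace).re


/-- The perturbed density matrix `D^h = e^{log D + h} / Tr(e^{log D + h})`. -/
def pert {k : Type*} [Fintype k] [DecidableEq k] (D h : Matrix k k ℂ) : Matrix k k ℂ :=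
  (NormedSpace.exp (matLog D + h)).trace⁻¹ • NormedSpace.exp (matLog D + h)

variable {k : Type*} [Fintype k] [DecidableEq k]

open scoped Matrix.Norms.L2Operator


lemma hermCalc_eq (f : ℝ → ℝ) {A : Matrix k k ℂ}
    (hA : A.IsHermitian) : hermCalc f A = cfc f A := by
  rw [hermCalc, dif_pos hA, hA.cfc_eq]
  rfl

lemma trace_hermCalc (f : ℝ → ℝ) {A : Matrix k k ℂ}
    (hA : A.IsHermitian) : (hermCalc f A).trace = ∑ i, (f (hA.eigenvalues i) : ℂ) := by
  rw [hermCalc, dif_pos hA, Matrix.trace_mul_cycle, Unitary.coe_star_mul_self, Matrix.one_mul,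
    Matrix.trace_diagonal]


lemma quad_bound (A : Matrix k k ℂ) (v : EuclideanSpace ℂ k) (hv : ‖v‖ = 1) :
    ‖star (WithLp.equiv 2 _ v) ⬝ᵥ (A *ᵥ WithLp.equiv 2 _ v)‖ ≤ opNorm A := by
  have h1 : (inner ℂ v (toEuclideanCLM (𝕜 := ℂ) A v) : ℂ)
      = star (WithLp.equiv 2 _ v) ⬝ᵥ (A *ᵥ WithLp.equiv 2 _ v) := by
    rw [EuclideanSpace.inner_eq_star_dotProduct, dotProduct_comm]; rfl
  rw [← h1]
  calc ‖(inner ℂ v (toEuclideanCLM (𝕜 := ℂ) A v) : ℂ)‖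
      ≤ ‖v‖ * ‖toEuclideanCLM (𝕜 := ℂ) A v‖ := norm_inner_le_norm _ _
    _ ≤ ‖v‖ * (‖(toEuclideanCLM (𝕜 := ℂ) A : EuclideanSpace ℂ k →L[ℂ] EuclideanSpace ℂ k)‖ * ‖v‖) :=
        mul_le_mul_of_nonneg_left (ContinuousLinearMap.le_opNorm _ v) (norm_nonneg _)
    _ = opNorm A := by rw [hv, opNorm]; ring

-- decompose quadratic form of a Hermitian matrix through its eigen-decomposition
lemma quad_spectral {L : Matrix k k ℂ} (hL : L.IsHermitian) (v : k → ℂ) :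
    star v ⬝ᵥ (L *ᵥ v) =
      ∑ j, (hL.eigenvalues j : ℂ) * (‖(star (hL.eigenvectorUnitary : Matrix k k ℂ) *ᵥ v) j‖ ^ 2 : ℝ) := by
  set U : Matrix k k ℂ := (hL.eigenvectorUnitary : Matrix k k ℂ)
  set y : k → ℂ := star U *ᵥ v
  conv_lhs => rw [hL.spectral_theorem, Unitary.conjStarAlgAut_apply]
  rw [← Matrix.mulVec_mulVec, ← Matrix.mulVec_mulVec, Matrix.dotProduct_mulVec (star v) U]
  have hsv : star v ᵥ* U = star y := by
    rw [Matrix.star_mulVec]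
    rw [Matrix.star_eq_conjTranspose, Matrix.conjTranspose_conjTranspose]
  rw [hsv]
  show star y ⬝ᵥ (Matrix.diagonal (RCLike.ofReal ∘ hL.eigenvalues) *ᵥ y) = _
  simp only [dotProduct, Matrix.mulVec_diagonal, Pi.star_apply]
  refine Finset.sum_congr rfl fun j _ => ?_
  simp only [Function.comp_apply]
  rw [show star (y j) * ((RCLike.ofReal (hL.eigenvalues j) : ℂ) * y j)
      = (RCLike.ofReal (hL.eigenvalues j) : ℂ) * (y j * star (y j)) from by ring,
    RCLike.star_def, RCLike.mul_conj]
  norm_cast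

lemma trace_eq_sum_eigenvalues {A : Matrix k k ℂ} (hA : A.IsHermitian) :
    A.trace = ∑ i, (hA.eigenvalues i : ℂ) := by
  conv_lhs => rw [hA.spectral_theorem, Unitary.conjStarAlgAut_apply]
  rw [Matrix.trace_mul_cycle, Unitary.coe_star_mul_self, Matrix.one_mul, Matrix.trace_diagonal]
  rfl

lemma unitary_row_sum (W : Matrix k k ℂ) (hW : W ∈ Matrix.unitaryGroup k ℂ) (j : k) :
    ∑ i, ‖W j i‖ ^ 2 = 1 := by
  have h1 : (W * star W) j j = 1 := by
    rw [(Matrix.mem_unitaryGroup_iff).mp hW]; simp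
  have h2 : (W * star W) j j = ((∑ i, ‖W j i‖ ^ 2 : ℝ) : ℂ) := by
    simp only [Matrix.mul_apply, Matrix.star_apply, Complex.star_def, Complex.mul_conj,
      Complex.ofReal_sum, Complex.normSq_eq_norm_sq]
  have h3 : ((∑ i, ‖W j i‖ ^ 2 : ℝ) : ℂ) = 1 := h2 ▸ h1
  exact_mod_cast h3

lemma unitary_col_sum (W : Matrix k k ℂ) (hW : W ∈ Matrix.unitaryGroup k ℂ) (i : k) :
    ∑ j, ‖W j i‖ ^ 2 = 1 := by
  have h1 : (star W * W) i i = 1 := by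
    rw [(Matrix.mem_unitaryGroup_iff').mp hW]; simp
  have h2 : (star W * W) i i = ((∑ j, ‖W j i‖ ^ 2 : ℝ) : ℂ) := by
    simp only [Matrix.mul_apply, Matrix.star_apply, Complex.star_def, Complex.ofReal_sum]
    congr 1; ext j
    rw [mul_comm, Complex.mul_conj, Complex.normSq_eq_norm_sq]
  have h3 : ((∑ j, ‖W j i‖ ^ 2 : ℝ) : ℂ) = 1 := h2 ▸ h1
  exact_mod_cast h3


lemma sum_exp_le {k : Type*} [Fintype k] [DecidableEq k] (L h : Matrix k k ℂ)
    (hL : L.IsHermitian) (hM : (L + h).IsHermitian) :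
    ∑ i, Real.exp (hM.eigenvalues i)
      ≤ Real.exp (opNorm h) * ∑ j, Real.exp (hL.eigenvalues j) := by
  classical
  set U : Matrix k k ℂ := (hL.eigenvectorUnitary : Matrix k k ℂ) with hU
  set V : Matrix k k ℂ := (hM.eigenvectorUnitary : Matrix k k ℂ) with hV
  set W : Matrix k k ℂ := star U * V with hW
  have hWu : W ∈ Matrix.unitaryGroup k ℂ :=
    mul_mem (Unitary.star_mem hL.eigenvectorUnitary.2) hM.eigenvectorUnitary.2
  set w : k → k → ℝ := fun i j => ‖W j i‖ ^ 2 with hwdef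
  have hw0 : ∀ i j, 0 ≤ w i j := fun i j => sq_nonneg _
  have hwrow : ∀ i, ∑ j, w i j = 1 := fun i => unitary_col_sum W hWu i
  have hwcol : ∀ j, ∑ i, w i j = 1 := fun j => unitary_row_sum W hWu j
  -- identify (star U *ᵥ v_i) j with W j i
  have hyW : ∀ i j, (star U *ᵥ ⇑(hM.eigenvectorBasis i)) j = W j i := by
    intro i j
    simp only [hW, Matrix.mul_apply, Matrix.mulVec, dotProduct]
    refine Finset.sum_congr rfl fun l _ => ?_
    rw [hV, Matrix.IsHermitian.eigenvectorUnitary_apply]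
  -- per-eigenvalue bound
  have key : ∀ i, Real.exp (hM.eigenvalues i)
      ≤ Real.exp (opNorm h) * ∑ j, w i j * Real.exp (hL.eigenvalues j) := by
    intro i
    have hvnorm : ‖(hM.eigenvectorBasis i : EuclideanSpace ℂ k)‖ = 1 :=
      hM.eigenvectorBasis.orthonormal.1 i
    have h1 : hM.eigenvalues i
        = (star ⇑(hM.eigenvectorBasis i) ⬝ᵥ (L *ᵥ ⇑(hM.eigenvectorBasis i))).re + (star ⇑(hM.eigenvectorBasis i) ⬝ᵥ (h *ᵥ ⇑(hM.eigenvectorBasis i))).re := by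
      have := hM.eigenvalues_eq i
      rw [this, Matrix.add_mulVec, dotProduct_add]
      rfl
    have h2 : (star ⇑(hM.eigenvectorBasis i) ⬝ᵥ (L *ᵥ ⇑(hM.eigenvectorBasis i))).re = ∑ j, hL.eigenvalues j * w i j := by
      rw [quad_spectral hL]
      rw [Complex.re_sum]
      refine Finset.sum_congr rfl fun j _ => ?_
      rw [hwdef]
      simp only []
      rw [← hyW i j, ← Complex.ofReal_mul, Complex.ofReal_re]
    have h3 : (star ⇑(hM.eigenvectorBasis i) ⬝ᵥ (h *ᵥ ⇑(hM.eigenvectorBasis i))).re ≤ opNorm h := by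
      refine le_trans (Complex.re_le_norm _) ?_
      exact quad_bound h _ hvnorm
    have h4 : hM.eigenvalues i ≤ (∑ j, hL.eigenvalues j * w i j) + opNorm h := by
      rw [h1, h2]; linarith
    calc Real.exp (hM.eigenvalues i)
        ≤ Real.exp ((∑ j, hL.eigenvalues j * w i j) + opNorm h) := Real.exp_le_exp.2 h4
      _ = Real.exp (opNorm h) * Real.exp (∑ j, w i j * hL.eigenvalues j) := by
          rw [Real.exp_add, mul_comm]
          congr 2
          exact Finset.sum_congr rfl fun j _ => mul_comm _ _
      _ ≤ Real.exp (opNorm h) * ∑ j, w i j * Real.exp (hL.eigenvalues j) := by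
          refine mul_le_mul_of_nonneg_left ?_ (Real.exp_nonneg _)
          have := convexOn_exp.map_sum_le (t := Finset.univ) (w := w i)
            (p := fun j => hL.eigenvalues j) (fun j _ => hw0 i j) (hwrow i)
            (fun j _ => Set.mem_univ _)
          simpa [smul_eq_mul] using this
  calc ∑ i, Real.exp (hM.eigenvalues i)
      ≤ ∑ i, Real.exp (opNorm h) * ∑ j, w i j * Real.exp (hL.eigenvalues j) :=
        Finset.sum_le_sum fun i _ => key i
    _ = Real.exp (opNorm h) * ∑ j, (∑ i, w i j) * Real.exp (hL.eigenvalues j) := by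
        rw [← Finset.mul_sum]
        congr 1
        rw [Finset.sum_comm]
        refine Finset.sum_congr rfl fun j _ => ?_
        rw [Finset.sum_mul]
    _ = Real.exp (opNorm h) * ∑ j, Real.exp (hL.eigenvalues j) := by
        congr 1
        exact Finset.sum_congr rfl fun j _ => by rw [hwcol j, one_mul]


lemma trace_mul_herm {A B : Matrix k k ℂ} (hA : A.IsHermitian) :
    (A * B).trace = ∑ j, (hA.eigenvalues j : ℂ) *
      (star ⇑(hA.eigenvectorBasis j) ⬝ᵥ (B *ᵥ ⇑(hA.eigenvectorBasis j))) := by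
  conv_lhs => rw [hA.spectral_theorem, Unitary.conjStarAlgAut_apply]
  rw [Matrix.mul_assoc, Matrix.mul_assoc, Matrix.trace_mul_comm,
    Matrix.mul_assoc (Matrix.diagonal _)]
  have : ∀ j, ((star (hA.eigenvectorUnitary : Matrix k k ℂ) * B *
        (hA.eigenvectorUnitary : Matrix k k ℂ))) j j
      = star ⇑(hA.eigenvectorBasis j) ⬝ᵥ (B *ᵥ ⇑(hA.eigenvectorBasis j)) := by
    intro j
    simp only [Matrix.mul_apply, Matrix.mulVec, dotProduct, Pi.star_apply,
      Matrix.star_apply, Matrix.IsHermitian.eigenvectorUnitary_apply, Finset.sum_mul,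
      Finset.mul_sum]
    rw [Finset.sum_comm]
    refine Finset.sum_congr rfl fun l _ => Finset.sum_congr rfl fun m _ => by ring
  rw [Matrix.trace]
  simp only [Matrix.diag_apply, Matrix.mul_apply, Matrix.diagonal_apply, Function.comp_apply]
  calc ∑ j, ∑ l, (if j = l then (hA.eigenvalues j : ℂ) else 0) *
        ((star (hA.eigenvectorUnitary : Matrix k k ℂ) * B *
          (hA.eigenvectorUnitary : Matrix k k ℂ)) l j)
      = ∑ j, (hA.eigenvalues j : ℂ) * ((star (hA.eigenvectorUnitary : Matrix k k ℂ) * B *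
          (hA.eigenvectorUnitary : Matrix k k ℂ)) j j) := by
        refine Finset.sum_congr rfl fun j _ => ?_
        simp [ite_mul, Finset.sum_ite_eq]
    _ = _ := Finset.sum_congr rfl fun j _ => by rw [this j]


/-- relative entropy bound for perturbed states, second direction. -/
theorem relEntropy_pert_right {n : ℕ}
    (D : Matrix (Fin n) (Fin n) ℂ) (hD : D.PosDef) (hDtr : D.trace = 1)
    (h : Matrix (Fin n) (Fin n) ℂ) (hh : h.IsHermitian) :
    relEntropy D (pert D h) =
      Real.log (((NormedSpace.exp (matLog D + h)).trace).re) - ((D * h).trace).re ∧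
    relEntropy D (pert D h) ≤ 2 * opNorm h := by
  have hn : Nonempty (Fin n) := by
    rcases Nat.eq_zero_or_pos n with h0 | h0
    · subst h0
      simp [Matrix.trace] at hDtr
    · exact ⟨⟨0, h0⟩⟩
  have hDH : D.IsHermitian := hD.1
  have hDsa : IsSelfAdjoint D := hDH
  have hspecD : ∀ x ∈ spectrum ℝ D, 0 < x := by
    rw [hDH.spectrum_real_eq_range_eigenvalues]
    rintro - ⟨i, rfl⟩
    exact hD.eigenvalues_pos i
  have hlogD : matLog D = CFC.log D := by
    rw [matLog, hermCalc_eq Real.log hDH]; rfl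
  have hLsa : IsSelfAdjoint (matLog D) := hlogD ▸ IsSelfAdjoint.log
  have hMsa : IsSelfAdjoint (matLog D + h) := hLsa.add hh
  have hMH : (matLog D + h).IsHermitian := hMsa
  have hexpRC : NormedSpace.exp (matLog D + h) = NormedSpace.exp (matLog D + h) :=
    rfl
  have hexp : NormedSpace.exp (matLog D + h) = cfc Real.exp (matLog D + h) := by
    rw [hexpRC, CFC.real_exp_eq_normedSpace_exp hMsa]
  set c : ℝ := ∑ i, Real.exp (hMH.eigenvalues i) with hcdef
  have htrace : (NormedSpace.exp (matLog D + h)).trace = (c : ℂ) := by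
    rw [hexp, ← hermCalc_eq Real.exp hMH, trace_hermCalc Real.exp hMH, hcdef]
    push_cast
    rfl
  have hcpos : 0 < c := Finset.sum_pos (fun i _ => Real.exp_pos _) Finset.univ_nonempty
  have hEsa : IsSelfAdjoint (NormedSpace.exp (matLog D + h)) := by
    rw [hexp]
    exact cfc_predicate Real.exp _
  have hpert : pert D h = c⁻¹ • NormedSpace.exp (matLog D + h) := by
    rw [pert, htrace, ← Complex.ofReal_inv,
      show ((c⁻¹ : ℝ) : ℂ) = algebraMap ℝ ℂ c⁻¹ from rfl, algebraMap_smul]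
  have hspecE : ∀ x ∈ spectrum ℝ (NormedSpace.exp (matLog D + h)), 0 < x := by
    rw [hexp, cfc_map_spectrum Real.exp _]
    rintro - ⟨x, -, rfl⟩
    exact Real.exp_pos x
  have hpertH : (pert D h).IsHermitian := by
    rw [hpert]
    exact IsSelfAdjoint.smul (star_trivial _) hEsa
  have hlogpert : matLog (pert D h)
      = (- Real.log c) • (1 : Matrix (Fin n) (Fin n) ℂ) + (matLog D + h) := by
    rw [matLog, hermCalc_eq Real.log hpertH]
    show CFC.log (pert D h) = _
    rw [hpert, CFC.log_smul _ (fun x hx => (hspecE x hx).ne') (inv_pos.2 hcpos).ne' hEsa, hexpRC, CFC.log_exp _ hMsa,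
      Real.log_inv, Algebra.algebraMap_eq_smul_one]
  have hEq : relEntropy D (pert D h) = Real.log c - ((D * h).trace).re := by
    rw [relEntropy, hlogpert]
    have hsimp : matLog D - ((- Real.log c) • (1 : Matrix (Fin n) (Fin n) ℂ) + (matLog D + h))
        = Real.log c • (1 : Matrix (Fin n) (Fin n) ℂ) - h := by
      module
    rw [hsimp, Matrix.mul_sub, Matrix.trace_sub, mul_smul_comm, Matrix.mul_one,
      Matrix.trace_smul, hDtr]
    simp
  have hLH : (matLog D).IsHermitian := hLsa
  have hTrD : ∑ j, hDH.eigenvalues j = 1 := by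
    have h2 := trace_eq_sum_eigenvalues hDH
    rw [hDtr] at h2
    exact_mod_cast h2.symm
  have hReTr : -opNorm h ≤ ((D * h).trace).re := by
    rw [trace_mul_herm hDH, Complex.re_sum]
    have hterm : ∀ j, -opNorm h * hDH.eigenvalues j
        ≤ ((hDH.eigenvalues j : ℂ) *
          (star ⇑(hDH.eigenvectorBasis j) ⬝ᵥ (h *ᵥ ⇑(hDH.eigenvectorBasis j)))).re := by
      intro j
      set q : ℂ := star ⇑(hDH.eigenvectorBasis j) ⬝ᵥ (h *ᵥ ⇑(hDH.eigenvectorBasis j)) with hq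
      have h1 : ((hDH.eigenvalues j : ℂ) * q).re = hDH.eigenvalues j * q.re := by
        simp [Complex.ofReal_mul]
      have h2 : ‖q‖ ≤ opNorm h := quad_bound h _ (hDH.eigenvectorBasis.orthonormal.1 j)
      have h3 : -opNorm h ≤ q.re := by
        have h4 : |q.re| ≤ opNorm h :=
          le_trans (le_trans (Complex.abs_re_le_norm q) le_rfl) h2
        linarith [(abs_le.mp h4).1]
      rw [h1]
      have hd0 : 0 ≤ hDH.eigenvalues j := le_of_lt (hD.eigenvalues_pos j)
      calc -opNorm h * hDH.eigenvalues j = hDH.eigenvalues j * (-opNorm h) := by ring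
        _ ≤ hDH.eigenvalues j * q.re := mul_le_mul_of_nonneg_left h3 hd0
    calc -opNorm h = -opNorm h * ∑ j, hDH.eigenvalues j := by rw [hTrD]; ring
      _ = ∑ j, -opNorm h * hDH.eigenvalues j := by rw [Finset.mul_sum]
      _ ≤ _ := Finset.sum_le_sum fun j _ => hterm j
  have hlogc : Real.log c ≤ opNorm h := by
    have hsum := sum_exp_le (matLog D) h hLH hMH
    have hexpL : hermCalc Real.exp (matLog D) = D := by
      rw [hermCalc_eq Real.exp hLH, CFC.real_exp_eq_normedSpace_exp hLsa, hlogD,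
        (open MatrixOrder in CFC.exp_log D hD.isStrictlyPositive)]
    have hone : ∑ j, Real.exp (hLH.eigenvalues j) = 1 := by
      have h2 := trace_hermCalc Real.exp hLH
      rw [hexpL, hDtr] at h2
      exact_mod_cast h2.symm
    rw [hone, mul_one] at hsum
    calc Real.log c ≤ Real.log (Real.exp (opNorm h)) :=
          Real.log_le_log hcpos hsum
      _ = opNorm h := Real.log_exp _
  constructor
  · rw [hEq, htrace, Complex.ofReal_re]
  · rw [hEq]
    linarith


end TAL
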